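/- If a nested family of simple cycles in a planar embedded graph with n faces separates every pair of faces (for any two faces there is a cycle in the family with one face inside and the other outside), and the family is inclusion-minimal with that property, then the family contains exactly n − 1 cycles. -/

import Mathlib

open Classical

attribute [local instance] Classical.propDecidable

/-- A cycle of a planar embedded graph, modelled by the set of faces in its interior,
separates faces `f` and `g` if one of them is inside and the other outside. -/
def SeparatesFaces {Face : Type*} (intC : Set Face) (f g : Face) : Prop :=
  (f ∈ intC ∧ g ∉ intC) ∨ (g ∈ intC ∧ f ∉ intC)

/-- A family of interiors of simple cycles is nested if any two are disjoint or one
contains the other. -/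
def NestedFamily {Face : Type*} (𝓕 : Finset (Set Face)) : Prop :=
  ∀ A ∈ 𝓕, ∀ B ∈ 𝓕, A ⊆ B ∨ B ⊆ A ∨ Disjoint A B

section Aux

variable {Face : Type*}

/-- The minimal member of `𝓕` containing `x`, if any. -/
noncomputable def minSet (𝓕 : Finset (Set Face)) (x : Face) : Option (Set Face) :=
  if h : (𝓕.filter (fun A => x ∈ A)).Nonempty then
    some (Finset.exists_minimal h).choose
  else none

lemma minSet_none {𝓕 : Finset (Set Face)} {x : Face} (h : minSet 𝓕 x = none) :
    ∀ A ∈ 𝓕, x ∉ A := by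
  intro A hA hx
  unfold minSet at h
  rw [dif_pos ⟨A, Finset.mem_filter.2 ⟨hA, hx⟩⟩] at h
  simp at h

lemma minSet_some {𝓕 : Finset (Set Face)} (hnested : NestedFamily 𝓕) {x : Face}
    {A : Set Face} (h : minSet 𝓕 x = some A) :
    A ∈ 𝓕 ∧ x ∈ A ∧ ∀ B ∈ 𝓕, x ∈ B → A ⊆ B := by
  unfold minSet at h
  split_ifs at h with hne
  · obtain ⟨hmem, hminim⟩ := (Finset.exists_minimal hne).choose_spec
    injection h with h'
    rw [h'] at hmem hminim
    obtain ⟨hA𝓕, hxA⟩ := Finset.mem_filter.1 hmem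
    refine ⟨hA𝓕, hxA, ?_⟩
    intro B hB hxB
    rcases hnested A hA𝓕 B hB with h1 | h2 | h3
    · exact h1
    · rcases eq_or_lt_of_le h2 with he | hl
      · exact le_of_eq he.symm
      · exact absurd (hminim (Finset.mem_filter.2 ⟨hB, hxB⟩) hl.le) (not_le_of_gt hl)
    · exact (Set.disjoint_left.mp h3 hxA hxB).elim

lemma minSet_inj {𝓕 : Finset (Set Face)} (hnested : NestedFamily 𝓕)
    (hsep : ∀ f g : Face, f ≠ g → ∃ A ∈ 𝓕, SeparatesFaces A f g) :
    Function.Injective (minSet 𝓕) := by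
  intro x y hxy
  by_contra hne
  obtain ⟨A, hA, hsepA⟩ := hsep x y hne
  have key : ∀ u v : Face, u ∈ A → v ∉ A → minSet 𝓕 u = minSet 𝓕 v → False := by
    intro u v hu hv huv
    cases hM : minSet 𝓕 u with
    | none => exact minSet_none hM A hA hu
    | some M =>
      obtain ⟨hM𝓕, huM, hminim⟩ := minSet_some hnested hM
      have hMA : M ⊆ A := hminim A hA hu
      have hv' : v ∈ M := (minSet_some hnested (huv ▸ hM)).2.1
      exact hv (hMA hv')
  rcases hsepA with ⟨hx, hy⟩ | ⟨hy, hx⟩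
  · exact key x y hx hy hxy
  · exact key y x hy hx hxy.symm

end Aux

/-- If a nested family of simple cycles in a planar embedded graph with `n` faces
(cycles being identified with the sets of faces in their interiors, which are proper
nonempty subsets of the face set) separates every pair of faces, and the family is
inclusion-minimal with that property, then the family contains exactly `n − 1`
cycles. -/
theorem minimal_nested_separating_family_card
    {Face : Type*} [Fintype Face] (n : ℕ) (hn : n = Fintype.card Face)
    (𝓕 : Finset (Set Face))
    (hproper : ∀ A ∈ 𝓕, A.Nonempty ∧ A ≠ Set.univ)
    (hnested : NestedFamily 𝓕)
    (hsep : ∀ f g : Face, f ≠ g → ∃ A ∈ 𝓕, SeparatesFaces A f g)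
    (hmin : ∀ 𝓖 : Finset (Set Face), 𝓖 ⊂ 𝓕 →
      ¬ (∀ f g : Face, f ≠ g → ∃ A ∈ 𝓖, SeparatesFaces A f g)) :
    𝓕.card = n - 1 := by
  have hinj := minSet_inj hnested hsep
  set T := Finset.univ.image (minSet 𝓕) with hT
  have hTcard : T.card = n := by
    rw [hT, Finset.card_image_of_injective _ hinj, Finset.card_univ, hn]
  have hTsub : T ⊆ insert none (𝓕.image some) := by
    intro y hy
    obtain ⟨x, _, rfl⟩ := Finset.mem_image.1 hy
    cases hM : minSet 𝓕 x with
    | none => exact Finset.mem_insert_self _ _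
    | some M =>
      exact Finset.mem_insert_of_mem
        (Finset.mem_image_of_mem _ (minSet_some hnested hM).1)
  have hlow : n ≤ 𝓕.card + 1 := by
    calc n = T.card := hTcard.symm
      _ ≤ (insert none (𝓕.image some)).card := Finset.card_le_card hTsub
      _ ≤ (𝓕.image some).card + 1 := Finset.card_insert_le _ _
      _ ≤ 𝓕.card + 1 := Nat.add_le_add_right Finset.card_image_le 1
  rcases Nat.eq_zero_or_pos n with h0 | hpos
  · have hFempty : IsEmpty Face := by
      rw [h0] at hn; exact Fintype.card_eq_zero_iff.mp hn.symm
    have h𝓕 : 𝓕 = ∅ := by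
      rw [Finset.eq_empty_iff_forall_notMem]
      intro A hA
      obtain ⟨⟨x, _⟩, _⟩ := hproper A hA
      exact hFempty.false x
    simp [h𝓕, h0]
  · by_contra hcard
    have hge : n ≤ 𝓕.card := by omega
    have hmain : ∃ A ∈ 𝓕, ∀ f g : Face, f ≠ g →
        ∃ B ∈ 𝓕.erase A, SeparatesFaces B f g := by
      by_cases hall : ∀ A ∈ 𝓕, ∃ x, minSet 𝓕 x = some A
      · -- every cycle is the minimal one of some face; then every face has a minimal cycle
        have hnonone : ∀ x, minSet 𝓕 x ≠ none := by
          intro x hx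
          have hsub2 : insert none (𝓕.image some) ⊆ T := by
            intro y hy
            rcases Finset.mem_insert.1 hy with rfl | hy'
            · exact Finset.mem_image.2 ⟨x, Finset.mem_univ x, hx⟩
            · obtain ⟨A, hA, rfl⟩ := Finset.mem_image.1 hy'
              obtain ⟨z, hz⟩ := hall A hA
              exact Finset.mem_image.2 ⟨z, Finset.mem_univ z, hz⟩
          have hc2 : (insert none (𝓕.image some)).card ≤ n :=
            hTcard ▸ Finset.card_le_card hsub2
          have hnotmem : (none : Option (Set Face)) ∉ 𝓕.image some := by simp
          rw [Finset.card_insert_of_notMem hnotmem,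
            Finset.card_image_of_injective _ (Option.some_injective _)] at hc2
          omega
        have h𝓕ne : 𝓕.Nonempty := Finset.card_pos.1 (by omega)
        obtain ⟨A, hA, hmax⟩ := Finset.exists_maximal h𝓕ne
        refine ⟨A, hA, ?_⟩
        intro f g hfg
        obtain ⟨B, hB, hsepB⟩ := hsep f g hfg
        by_cases hBA : B = A
        · subst hBA
          have key : ∀ u v : Face, u ∈ B → v ∉ B →
              ∃ C ∈ 𝓕.erase B, SeparatesFaces C u v := by
            intro u v hu hv
            cases hM : minSet 𝓕 u with
            | none => exact absurd hM (hnonone u)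
            | some M =>
              obtain ⟨hM𝓕, huM, hminim⟩ := minSet_some hnested hM
              have hMB : M ⊆ B := hminim B hB hu
              by_cases hMeq : M = B
              · cases hN : minSet 𝓕 v with
                | none => exact absurd hN (hnonone v)
                | some N =>
                  obtain ⟨hN𝓕, hvN, _⟩ := minSet_some hnested hN
                  have hdisj : Disjoint B N := by
                    rcases hnested B hB N hN𝓕 with h1 | h2 | h3
                    · rcases eq_or_lt_of_le h1 with he | hl
                      · exact absurd (he ▸ hvN) hv
                      · exact absurd (hmax hN𝓕 hl.le) (not_le_of_gt hl)
                    · exact absurd (h2 hvN) hv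
                    · exact h3
                  refine ⟨N, Finset.mem_erase.2 ⟨?_, hN𝓕⟩, Or.inr ⟨hvN, ?_⟩⟩
                  · intro h; subst h; exact hv hvN
                  · exact fun h => Set.disjoint_left.mp hdisj hu h
              · exact ⟨M, Finset.mem_erase.2 ⟨hMeq, hM𝓕⟩,
                  Or.inl ⟨huM, fun h => hv (hMB h)⟩⟩
          rcases hsepB with ⟨hf, hg⟩ | ⟨hg, hf⟩
          · exact key f g hf hg
          · obtain ⟨C, hC, hs⟩ := key g f hg hf
            exact ⟨C, hC, Or.symm hs⟩
        · exact ⟨B, Finset.mem_erase.2 ⟨hBA, hB⟩, hsepB⟩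
      · -- some cycle A is minimal for no face; it can be removed
        push_neg at hall
        obtain ⟨A, hA, hnorange⟩ := hall
        refine ⟨A, hA, ?_⟩
        intro f g hfg
        obtain ⟨B, hB, hsepB⟩ := hsep f g hfg
        by_cases hBA : B = A
        · subst hBA
          have key : ∀ u v : Face, u ∈ B → v ∉ B →
              ∃ C ∈ 𝓕.erase B, SeparatesFaces C u v := by
            intro u v hu hv
            cases hM : minSet 𝓕 u with
            | none => exact absurd hu (minSet_none hM B hB)
            | some M =>
              obtain ⟨hM𝓕, huM, hminim⟩ := minSet_some hnested hM
              have hMB : M ⊆ B := hminim B hB hu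
              have hMne : M ≠ B := fun h => hnorange u (h ▸ hM)
              exact ⟨M, Finset.mem_erase.2 ⟨hMne, hM𝓕⟩,
                Or.inl ⟨huM, fun h => hv (hMB h)⟩⟩
          rcases hsepB with ⟨hf, hg⟩ | ⟨hg, hf⟩
          · exact key f g hf hg
          · obtain ⟨C, hC, hs⟩ := key g f hg hf
            exact ⟨C, hC, Or.symm hs⟩
        · exact ⟨B, Finset.mem_erase.2 ⟨hBA, hB⟩, hsepB⟩
    obtain ⟨A, hA, hsepG⟩ := hmain
    exact hmin (𝓕.erase A) (Finset.erase_ssubset hA) hsepG
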